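/- Consider the ODE system on polynomials p(t) ∈ ℂ[t] of degree ≤ k given by D₊ p = 0 and D₋ p = 0, where D₊ = (λ₁+λ₂+k−2)(k−θ_t) and D₋ = 2 d/dt + (λ₁−λ₂)(k−θ_t) + (t/2)(k−1−θ_t)(k−θ_t)², with θ_t = t·d/dt and k ≥ 1. Then the solution space is nonzero if and only if λ₁+λ₂+k−2 = 0, and in that case, writing s = λ₂−λ₁, the solution space is the one-dimensional span of p_c^{(s;k)}(t) = ∑_{m=0}^k (1/2^m) C(k,m) Cay_m(s;k) t^m. -/

import Mathlib

open Finset Polynomial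

/-- Falling factorial `r(r-1)⋯(r-j+1)`. -/
noncomputable def fallFac (r : ℂ) (j : ℕ) : ℂ := (descPochhammer ℂ j).eval r

/-- Rising factorial `r(r+1)⋯(r+j-1)`. -/
noncomputable def riseFac (r : ℂ) (j : ℕ) : ℂ := (ascPochhammer ℂ j).eval r

/-- Cayley continuant `Cay_m(x;y)`. -/
noncomputable def Cay (m : ℕ) (x y : ℂ) : ℂ :=
  ∑ j ∈ range (m + 1),
    (m.choose j : ℂ) * fallFac ((x + y) / 2) j * riseFac ((x - y) / 2) (m - j)

/-- The operator `(c − θ_t)` on `ℂ[t]`, where `θ_t = t·d/dt`. -/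
noncomputable def A (c : ℂ) (p : Polynomial ℂ) : Polynomial ℂ :=
  Polynomial.C c * p - Polynomial.X * derivative p

/-- The operator `D₊ = (λ₁+λ₂+k−2)(k−θ_t)`. -/
noncomputable def Dplus (lam1 lam2 : ℂ) (k : ℕ) (p : Polynomial ℂ) : Polynomial ℂ :=
  Polynomial.C (lam1 + lam2 + k - 2) * A (k : ℂ) p

/-- The operator `D₋ = 2 d/dt + (λ₁−λ₂)(k−θ_t) + (t/2)(k−1−θ_t)(k−θ_t)²`. -/
noncomputable def Dminus (lam1 lam2 : ℂ) (k : ℕ) (p : Polynomial ℂ) : Polynomial ℂ :=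
  2 * derivative p + Polynomial.C (lam1 - lam2) * A (k : ℂ) p +
    Polynomial.C (1 / 2 : ℂ) * Polynomial.X * A ((k : ℂ) - 1) (A (k : ℂ) (A (k : ℂ) p))

/-- The polynomial `p_c^{(s;k)}(t) = ∑_{m=0}^k (1/2^m) C(k,m) Cay_m(s;k) t^m`. -/
noncomputable def pcPoly (s : ℂ) (k : ℕ) : Polynomial ℂ :=
  ∑ m ∈ range (k + 1),
    Polynomial.C ((1 / 2 ^ m : ℂ) * (k.choose m : ℂ) * Cay m s (k : ℂ)) * Polynomial.X ^ m

lemma fallFac_zero (r : ℂ) : fallFac r 0 = 1 := by simp [fallFac, descPochhammer]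
lemma riseFac_zero (r : ℂ) : riseFac r 0 = 1 := by simp [riseFac, ascPochhammer]
lemma fallFac_succ (r : ℂ) (j : ℕ) : fallFac r (j+1) = fallFac r j * (r - j) := by
  simp [fallFac, descPochhammer_succ_right]
lemma riseFac_succ (r : ℂ) (j : ℕ) : riseFac r (j+1) = riseFac r j * (r + j) := by
  simp [riseFac, ascPochhammer_succ_right]

lemma Cay_zero (x y : ℂ) : Cay 0 x y = 1 := by
  simp [Cay, fallFac_zero, riseFac_zero]
lemma Cay_one (x y : ℂ) : Cay 1 x y = x := by
  simp [Cay, Finset.sum_range_succ, fallFac_zero, riseFac_zero, fallFac_succ, riseFac_succ]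
  ring

lemma pascal_split (m : ℕ) (f : ℕ → ℂ) :
    ∑ j ∈ range (m+2), ((m+1).choose j : ℂ) * f j
      = ∑ j ∈ range (m+1), (m.choose j : ℂ) * f j
        + ∑ j ∈ range (m+1), (m.choose j : ℂ) * f (j+1) := by
  rw [Finset.sum_range_succ' _ (m+1)]
  have h : ∀ i : ℕ, (((m+1).choose (i+1) : ℕ) : ℂ) = (m.choose i : ℂ) + (m.choose (i+1) : ℂ) := by
    intro i; rw [Nat.choose_succ_succ]; push_cast; ring
  simp only [h, add_mul]
  rw [Finset.sum_add_distrib]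
  have h2 : (∑ i ∈ range (m+1), (m.choose (i+1) : ℂ) * f (i+1)) + ((m+1).choose 0 : ℂ) * f 0
      = ∑ j ∈ range (m+1), (m.choose j : ℂ) * f j := by
    have := (Finset.sum_range_succ' (fun j => (m.choose j : ℂ) * f j) (m+1)).symm
    simp only [Nat.choose_zero_right, Nat.cast_one] at this ⊢
    rw [this, Finset.sum_range_succ]
    simp
  linear_combination h2

lemma G_step (m : ℕ) (a b : ℂ) :
    ∑ j ∈ range (m+2), ((m+1).choose j : ℂ) * (fallFac a j * riseFac b (m+1-j))
      = ∑ j ∈ range (m+1), (m.choose j : ℂ) *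
          ((a + b + m - 2*j) * (fallFac a j * riseFac b (m-j))) := by
  rw [pascal_split m (fun j => fallFac a j * riseFac b (m+1-j))]
  rw [← Finset.sum_add_distrib]
  refine Finset.sum_congr rfl fun j hj => ?_
  have hjm : j ≤ m := Nat.lt_succ_iff.mp (Finset.mem_range.mp hj)
  have h1 : m + 1 - j = (m - j) + 1 := by omega
  have h2 : m + 1 - (j + 1) = m - j := by omega
  have hc : ((m - j : ℕ) : ℂ) = (m : ℂ) - j := by
    push_cast [Nat.cast_sub hjm]; ring
  rw [h1, h2, riseFac_succ, fallFac_succ, hc]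
  ring

lemma S_formula (m : ℕ) (a b : ℂ) :
    ∑ j ∈ range (m+2), ((m+1).choose j : ℂ) *
        (((m:ℂ)+1-2*j) * (fallFac a j * riseFac b (m+1-j)))
      = ((m:ℂ)+1) * (b + (m:ℂ) - a) *
        ∑ j ∈ range (m+1), (m.choose j : ℂ) * (fallFac a j * riseFac b (m-j)) := by
  have split : ∀ j ∈ range (m+2),
      ((m+1).choose j : ℂ) * (((m:ℂ)+1-2*j) * (fallFac a j * riseFac b (m+1-j)))
      = (((m:ℂ)+1-j) * ((m+1).choose j : ℂ)) * (fallFac a j * riseFac b (m+1-j))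
        - ((j:ℂ) * ((m+1).choose j : ℂ)) * (fallFac a j * riseFac b (m+1-j)) := by
    intro j hj; ring
  rw [Finset.sum_congr rfl split, Finset.sum_sub_distrib]
  have hT1 : ∑ j ∈ range (m+2),
      (((m:ℂ)+1-j) * ((m+1).choose j : ℂ)) * (fallFac a j * riseFac b (m+1-j))
      = ((m:ℂ)+1) * ∑ j ∈ range (m+1), (m.choose j : ℂ) *
          ((b + ((m:ℂ)-j)) * (fallFac a j * riseFac b (m-j))) := by
    have key : ∀ j ∈ range (m+2),
        (((m:ℂ)+1-j) * ((m+1).choose j : ℂ)) * (fallFac a j * riseFac b (m+1-j))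
        = ((m:ℂ)+1) * ((m.choose j : ℂ) * (fallFac a j * riseFac b (m+1-j))) := by
      intro j hj
      have hj' : j ≤ m + 1 := Nat.lt_succ_iff.mp (Finset.mem_range.mp hj)
      have h := Nat.choose_mul_succ_eq m j
      have hcast : ((m:ℂ)+1-j) * ((m+1).choose j : ℂ) = ((m.choose j : ℂ)) * ((m:ℂ)+1) := by
        have hC := congrArg (fun n : ℕ => (n:ℂ)) h
        push_cast [Nat.cast_sub hj'] at hC
        linear_combination -hC
      rw [hcast]; ring
    rw [Finset.sum_congr rfl key, ← Finset.mul_sum, Finset.sum_range_succ]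
    simp only [Nat.choose_succ_self, Nat.cast_zero, zero_mul, add_zero]
    congr 1
    refine Finset.sum_congr rfl fun j hj => ?_
    have hjm : j ≤ m := Nat.lt_succ_iff.mp (Finset.mem_range.mp hj)
    have h1 : m + 1 - j = (m - j) + 1 := by omega
    have hc : ((m - j : ℕ) : ℂ) = (m : ℂ) - j := by push_cast [Nat.cast_sub hjm]; ring
    rw [h1, riseFac_succ, hc]
    ring
  have hT2 : ∑ j ∈ range (m+2),
      ((j:ℂ) * ((m+1).choose j : ℂ)) * (fallFac a j * riseFac b (m+1-j))
      = ((m:ℂ)+1) * ∑ j ∈ range (m+1), (m.choose j : ℂ) *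
          ((a - j) * (fallFac a j * riseFac b (m-j))) := by
    rw [Finset.sum_range_succ' _ (m+1)]
    simp only [Nat.cast_zero, zero_mul, add_zero]
    rw [Finset.mul_sum]
    refine Finset.sum_congr rfl fun i hi => ?_
    have h := Nat.add_one_mul_choose_eq m i
    have hcast : ((i:ℂ)+1) * (((m+1).choose (i+1)) : ℂ) = ((m:ℂ)+1) * (m.choose i : ℂ) := by
      have hC := congrArg (fun n : ℕ => (n:ℂ)) h
      push_cast at hC
      linear_combination -hC
    have h2 : m + 1 - (i + 1) = m - i := by omega
    rw [h2, fallFac_succ]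
    push_cast
    linear_combination (fallFac a i * (a - i) * riseFac b (m-i)) * hcast
  rw [hT1, hT2, ← mul_sub, ← Finset.sum_sub_distrib, mul_assoc, Finset.mul_sum,
    Finset.mul_sum, Finset.mul_sum]
  exact Finset.sum_congr rfl fun j hj => by ring

lemma Cay_rec (m : ℕ) (x y : ℂ) :
    Cay (m+2) x y = x * Cay (m+1) x y - ((m:ℂ)+1) * (y - (m:ℂ)) * Cay m x y := by
  set a := (x+y)/2 with ha
  set b := (x-y)/2 with hb
  have hG := G_step (m+1) a b
  have hS := S_formula m a b
  have conv1 : Cay (m+2) x y = ∑ j ∈ range (m+1+2),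
      ((m+1+1).choose j : ℂ) * (fallFac a j * riseFac b (m+1+1-j)) := by
    simp only [Cay, ← ha, ← hb]
    rw [show m+2+1 = m+1+2 by omega]
    refine Finset.sum_congr rfl fun j hj => ?_
    rw [show m+2-j = m+1+1-j by omega, show m+2 = m+1+1 by omega]
    ring
  have conv2 : Cay (m+1) x y = ∑ j ∈ range (m+1+1),
      ((m+1).choose j : ℂ) * (fallFac a j * riseFac b (m+1-j)) := by
    simp only [Cay, ← ha, ← hb]
    exact Finset.sum_congr rfl fun j _ => by ring
  have conv3 : Cay m x y = ∑ j ∈ range (m+1),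
      (m.choose j : ℂ) * (fallFac a j * riseFac b (m-j)) := by
    simp only [Cay, ← ha, ← hb]
    exact Finset.sum_congr rfl fun j _ => by ring
  rw [conv1, hG]
  have split : ∑ j ∈ range (m+1+1), ((m+1).choose j : ℂ) *
      ((a + b + (↑(m+1):ℂ) - 2*j) * (fallFac a j * riseFac b (m+1-j)))
      = x * (∑ j ∈ range (m+1+1), ((m+1).choose j : ℂ) * (fallFac a j * riseFac b (m+1-j)))
        + ∑ j ∈ range (m+1+1), ((m+1).choose j : ℂ) *
            (((m:ℂ)+1-2*j) * (fallFac a j * riseFac b (m+1-j))) := by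
    rw [Finset.mul_sum, ← Finset.sum_add_distrib]
    refine Finset.sum_congr rfl fun j hj => ?_
    rw [ha, hb]
    push_cast
    ring
  rw [split, show m+1+1 = m+2 by omega, hS, ← conv2, ← conv3, ha, hb]
  ring

lemma A_coeff (c : ℂ) (p : Polynomial ℂ) (n : ℕ) :
    (A c p).coeff n = (c - n) * p.coeff n := by
  rcases n with _ | n
  · simp [A, mul_comm]
  · simp [A, coeff_X_mul, coeff_derivative]
    push_cast
    ring

lemma Dminus_coeff_zero (l1 l2 : ℂ) (k : ℕ) (p : Polynomial ℂ) :
    (Dminus l1 l2 k p).coeff 0 = 2 * p.coeff 1 + (l1 - l2) * k * p.coeff 0 := by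
  simp [Dminus, coeff_derivative, A_coeff]
  ring

lemma Dminus_coeff_succ (l1 l2 : ℂ) (k : ℕ) (p : Polynomial ℂ) (n : ℕ) :
    (Dminus l1 l2 k p).coeff (n+1) = 2 * ((n:ℂ)+2) * p.coeff (n+2)
      + (l1 - l2) * ((k:ℂ) - (n+1)) * p.coeff (n+1)
      + (1/2) * ((k:ℂ) - 1 - n) * ((k:ℂ) - n)^2 * p.coeff n := by
  have h3 : (Polynomial.C (1/2 : ℂ) * Polynomial.X *
      A ((k : ℂ) - 1) (A (k : ℂ) (A (k : ℂ) p))).coeff (n+1)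
      = (1/2) * ((k:ℂ) - 1 - n) * ((k:ℂ) - n)^2 * p.coeff n := by
    rw [mul_assoc, coeff_C_mul, coeff_X_mul, A_coeff, A_coeff, A_coeff]
    ring
  simp only [Dminus, coeff_add, h3, coeff_derivative, A_coeff, coeff_C_mul]
  rw [coeff_ofNat_mul, coeff_derivative]
  push_cast
  ring

lemma pcPoly_coeff (s : ℂ) (k n : ℕ) :
    (pcPoly s k).coeff n =
      if n ≤ k then (1 / 2 ^ n : ℂ) * (k.choose n : ℂ) * Cay n s (k : ℂ) else 0 := by
  rw [pcPoly, finset_sum_coeff]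
  simp only [coeff_C_mul, coeff_X_pow, mul_ite, mul_one, mul_zero]
  rw [Finset.sum_ite_eq (range (k+1)) n]
  simp [Finset.mem_range, Nat.lt_succ_iff]

lemma pcPoly_degree (s : ℂ) (k : ℕ) : (pcPoly s k).degree ≤ k := by
  refine (Polynomial.degree_sum_le _ _).trans ?_
  rw [Finset.sup_le_iff]
  intro m hm
  refine (Polynomial.degree_mul_le _ _).trans ?_
  calc (Polynomial.C _).degree + (Polynomial.X ^ m : Polynomial ℂ).degree
      ≤ 0 + m := add_le_add Polynomial.degree_C_le (Polynomial.degree_X_pow_le m)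
    _ ≤ (k : WithBot ℕ) := by
        rw [zero_add]
        exact_mod_cast Nat.cast_le.mpr (Nat.lt_succ_iff.mp (Finset.mem_range.mp hm))

lemma A_smul (c d : ℂ) (p : Polynomial ℂ) : A c (d • p) = d • A c p := by
  simp [A, smul_sub, mul_smul_comm]

lemma Dminus_smul (l1 l2 : ℂ) (k : ℕ) (d : ℂ) (p : Polynomial ℂ) :
    Dminus l1 l2 k (d • p) = d • Dminus l1 l2 k p := by
  simp [Dminus, A_smul, smul_add, mul_smul_comm]

lemma A_sub (c : ℂ) (p q : Polynomial ℂ) : A c (p - q) = A c p - A c q := by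
  simp [A]; ring

lemma Dminus_sub (l1 l2 : ℂ) (k : ℕ) (p q : Polynomial ℂ) :
    Dminus l1 l2 k (p - q) = Dminus l1 l2 k p - Dminus l1 l2 k q := by
  simp [Dminus, A_sub, derivative_sub]; ring

/-- uniqueness: a solution with zero constant term is zero -/
lemma Dminus_ker_unique (l1 l2 : ℂ) (k : ℕ) (q : Polynomial ℂ)
    (hD : Dminus l1 l2 k q = 0) (h0 : q.coeff 0 = 0) : q = 0 := by
  have key : ∀ n, q.coeff n = 0 := by
    intro n
    induction n using Nat.strong_induction_on with
    | _ n ih =>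
      match n, ih with
      | 0, _ => exact h0
      | 1, ih =>
        have h := Dminus_coeff_zero l1 l2 k q
        rw [hD, coeff_zero, h0] at h
        have h2 : (2:ℂ) * q.coeff 1 = 0 := by linear_combination -h
        exact (mul_eq_zero.mp h2).resolve_left two_ne_zero
      | (n+2), ih =>
        have h := Dminus_coeff_succ l1 l2 k q n
        rw [hD, coeff_zero, ih (n+1) (by omega), ih n (by omega)] at h
        have h2 : (2 * ((n:ℂ)+2)) * q.coeff (n+2) = 0 := by linear_combination -h
        have hne : (2 * ((n:ℂ)+2)) ≠ 0 := by
          refine mul_ne_zero two_ne_zero ?_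
          have : (((n+2:ℕ)):ℂ) ≠ 0 := Nat.cast_ne_zero.mpr (by omega)
          push_cast at this; exact this
        exact (mul_eq_zero.mp h2).resolve_left hne
  exact Polynomial.ext fun n => by rw [key n, coeff_zero]

lemma choose_cast_id (k n : ℕ) (h : n + 1 ≤ k) :
    ((k.choose (n+1) : ℂ)) * ((n:ℂ)+1) = (k.choose n : ℂ) * ((k:ℂ) - n) := by
  have hh := Nat.choose_succ_right_eq k n
  have hC := congrArg (fun m : ℕ => (m:ℂ)) hh
  push_cast [Nat.cast_sub (by omega : n ≤ k)] at hC
  exact hC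

lemma Dminus_pcPoly (l1 l2 : ℂ) (k : ℕ) (hk : 1 ≤ k) :
    Dminus l1 l2 k (pcPoly (l2 - l1) k) = 0 := by
  set s := l2 - l1 with hsdef
  have hs : l1 - l2 = -s := by rw [hsdef]; ring
  apply Polynomial.ext; intro n
  rw [coeff_zero]
  rcases n with _ | n
  · rw [Dminus_coeff_zero, pcPoly_coeff, pcPoly_coeff, if_pos hk, if_pos (Nat.zero_le k),
      Cay_zero, Cay_one, hs, Nat.choose_one_right, Nat.choose_zero_right]
    push_cast
    ring
  · rw [Dminus_coeff_succ]
    rcases lt_trichotomy (n+1) k with hlt | heq | hgt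
    · rw [pcPoly_coeff, pcPoly_coeff, pcPoly_coeff,
        if_pos (by omega : n+2 ≤ k), if_pos (by omega : n+1 ≤ k), if_pos (by omega : n ≤ k),
        hs, Cay_rec n s k]
      have c1 := choose_cast_id k (n+1) (by omega)
      have c2 := choose_cast_id k n (by omega)
      push_cast at c1 c2 ⊢
      linear_combination
        ((1/2^(n+1)) * ((s * Cay (n+1) s k) - ((n:ℂ)+1)*((k:ℂ)-n)*Cay n s k)) * c1
        - ((1/2^(n+1)) * ((k:ℂ)-(n+1)) * ((k:ℂ)-n) * Cay n s k) * c2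
    · have hk' : (k:ℂ) = (n:ℂ)+1 := by rw [← heq]; push_cast; ring
      rw [pcPoly_coeff, pcPoly_coeff, pcPoly_coeff,
        if_neg (by omega : ¬ n+2 ≤ k), if_pos (by omega : n+1 ≤ k), if_pos (by omega : n ≤ k),
        hk']
      ring
    · rcases Nat.eq_or_lt_of_le (by omega : k ≤ n) with hkn | hkn
      · have hkn : k = n := hkn
        have hk' : (k:ℂ) = (n:ℂ) := by rw [hkn]
        rw [pcPoly_coeff, pcPoly_coeff, pcPoly_coeff,
          if_neg (by omega : ¬ n+2 ≤ k), if_neg (by omega : ¬ n+1 ≤ k), if_pos (by omega : n ≤ k),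
          hk']
        ring
      · rw [pcPoly_coeff, pcPoly_coeff, pcPoly_coeff,
          if_neg (by omega : ¬ n+2 ≤ k), if_neg (by omega : ¬ n+1 ≤ k), if_neg (by omega : ¬ n ≤ k)]
        ring

lemma pcPoly_coeff_zero (s : ℂ) (k : ℕ) : (pcPoly s k).coeff 0 = 1 := by
  rw [pcPoly_coeff, if_pos (Nat.zero_le k), Cay_zero]
  simp

lemma pcPoly_ne_zero (s : ℂ) (k : ℕ) : pcPoly s k ≠ 0 := by
  intro h
  have h0 := pcPoly_coeff_zero s k
  rw [h, coeff_zero] at h0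
  exact zero_ne_one h0

/-- For `k ≥ 1`: the space of polynomials `p` of degree `≤ k` with
`D₊p = D₋p = 0` is nonzero iff `λ₁+λ₂+k−2 = 0`, in which case it is
the one-dimensional span of `p_c^{(s;k)}` with `s = λ₂−λ₁`. -/
theorem solution_space_diag (k : ℕ) (hk : 1 ≤ k) (lam1 lam2 : ℂ) :
    ((∃ p : Polynomial ℂ, p ≠ 0 ∧ p.degree ≤ k ∧
        Dplus lam1 lam2 k p = 0 ∧ Dminus lam1 lam2 k p = 0) ↔
      lam1 + lam2 + k - 2 = 0) ∧
    (lam1 + lam2 + k - 2 = 0 →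
      ∀ p : Polynomial ℂ,
        (p.degree ≤ k ∧ Dplus lam1 lam2 k p = 0 ∧ Dminus lam1 lam2 k p = 0) ↔
          ∃ c : ℂ, p = c • pcPoly (lam2 - lam1) k) := by

  constructor
  · constructor
    · rintro ⟨p, hp0, hdeg, hDp, hDm⟩
      by_contra hc
      have hDp' : Polynomial.C (lam1 + lam2 + (k:ℂ) - 2) * A (k:ℂ) p = 0 := hDp
      have hA : A (k:ℂ) p = 0 := by
        rcases mul_eq_zero.mp hDp' with h | h
        · exact absurd (Polynomial.C_eq_zero.mp h) hc
        · exact h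
      have hco : ∀ n, n ≠ k → p.coeff n = 0 := by
        intro n hn
        have h := congrArg (fun q : Polynomial ℂ => q.coeff n) hA
        simp only [A_coeff, coeff_zero] at h
        have hne : (k:ℂ) - n ≠ 0 := sub_ne_zero.mpr (by exact_mod_cast Ne.symm hn)
        exact (mul_eq_zero.mp h).resolve_left hne
      have hpk : p.coeff k ≠ 0 := by
        intro h
        apply hp0
        ext n
        rcases eq_or_ne n k with rfl | hnk
        · simpa using h
        · simpa using hco n hnk
      obtain ⟨j, rfl⟩ : ∃ j, k = j + 1 := ⟨k - 1, by omega⟩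
      rcases j with _ | i
      · have h := Dminus_coeff_zero lam1 lam2 1 p
        rw [hDm, coeff_zero, hco 0 (by omega)] at h
        have h2 : (2:ℂ) * p.coeff 1 = 0 := by push_cast at h; linear_combination -h
        exact hpk ((mul_eq_zero.mp h2).resolve_left two_ne_zero)
      · have h := Dminus_coeff_succ lam1 lam2 (i+2) p i
        rw [hDm, coeff_zero, hco (i+1) (by omega), hco i (by omega)] at h
        have h2 : (2 * ((i:ℂ)+2)) * p.coeff (i+2) = 0 := by push_cast at h; linear_combination -h
        have hne : (2 * ((i:ℂ)+2)) ≠ 0 := by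
          refine mul_ne_zero two_ne_zero ?_
          have : (((i+2:ℕ)):ℂ) ≠ 0 := Nat.cast_ne_zero.mpr (by omega)
          push_cast at this; exact this
        exact hpk ((mul_eq_zero.mp h2).resolve_left hne)
    · intro hc
      refine ⟨pcPoly (lam2 - lam1) k, pcPoly_ne_zero _ _, pcPoly_degree _ _, ?_, 
        Dminus_pcPoly lam1 lam2 k hk⟩
      show Polynomial.C (lam1 + lam2 + (k:ℂ) - 2) * A (k:ℂ) _ = 0
      rw [hc]
      simp
  · intro hc p
    constructor
    · rintro ⟨hdeg, hDp, hDm⟩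
      refine ⟨p.coeff 0, ?_⟩
      have hq : p - (p.coeff 0) • pcPoly (lam2 - lam1) k = 0 := by
        apply Dminus_ker_unique lam1 lam2 k
        · rw [Dminus_sub, Dminus_smul, Dminus_pcPoly lam1 lam2 k hk, hDm]
          simp
        · rw [coeff_sub, Polynomial.coeff_smul, pcPoly_coeff_zero]
          simp
      exact sub_eq_zero.mp hq
    · rintro ⟨c, rfl⟩
      refine ⟨?_, ?_, ?_⟩
      · exact (Polynomial.degree_smul_le _ _).trans (pcPoly_degree _ _)
      · show Polynomial.C (lam1 + lam2 + (k:ℂ) - 2) * A (k:ℂ) _ = 0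
        rw [hc]; simp
      · rw [Dminus_smul, Dminus_pcPoly lam1 lam2 k hk, smul_zero]
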